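/- For a weighted digraph G with Laplacian matrix L, the following are equivalent: (i) G is weight-balanced (every vertex has equal weighted in-degree and out-degree), (ii) the row vector of all ones satisfies 1ᵀL = 0, and (iii) L + Lᵀ is positive semidefinite. -/

import Mathlib

open Matrix BigOperators

lemma quad_key {n : ℕ} (B : Matrix (Fin n) (Fin n) ℝ) (hsym : ∀ i j, B i j = B j i)
    (x : Fin n → ℝ) :
    2 * (x ⬝ᵥ ((Matrix.diagonal (fun i => ∑ j, B i j) - B) *ᵥ x)) =
      ∑ i, ∑ j, B i j * (x i - x j) ^ 2 := by
  have h1 : x ⬝ᵥ ((Matrix.diagonal (fun i => ∑ j, B i j) - B) *ᵥ x)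
      = (∑ i, ∑ j, B i j * x i * x i) - ∑ i, ∑ j, B i j * x i * x j := by
    simp only [dotProduct, Matrix.mulVec, Matrix.sub_apply, Matrix.diagonal_apply,
      sub_mul, Finset.sum_sub_distrib, mul_sub, Finset.mul_sum]
    congr 1
    · apply Finset.sum_congr rfl; intro i _
      rw [Finset.sum_eq_single i]
      · rw [if_pos rfl, Finset.sum_mul, Finset.mul_sum]; apply Finset.sum_congr rfl; intro j _; ring
      · intro b _ hb; simp [Ne.symm hb]
      · simp
    · apply Finset.sum_congr rfl; intro i _
      apply Finset.sum_congr rfl; intro j _; ring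
  have h2 : ∑ i, ∑ j, B i j * x j * x j = ∑ i, ∑ j, B i j * x i * x i := by
    rw [Finset.sum_comm]
    apply Finset.sum_congr rfl; intro i _
    apply Finset.sum_congr rfl; intro j _
    rw [hsym]
  rw [h1]
  have h3 : ∀ i j, B i j * (x i - x j) ^ 2
      = B i j * x i * x i + B i j * x j * x j - 2 * (B i j * x i * x j) := by
    intro i j; ring
  simp_rw [h3, Finset.sum_sub_distrib, Finset.sum_add_distrib, h2, ← Finset.mul_sum]
  ring

/-- For a weighted digraph `G` with nonnegative adjacency matrix `A` and
Laplacian `L = D_out − A`, the following are equivalent: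
(i) `G` is weight-balanced, (ii) `𝟙ᵀ L = 0`, (iii) `L + Lᵀ` is positive semidefinite. -/
theorem weight_balanced_tfae {n : ℕ} (A : Matrix (Fin n) (Fin n) ℝ)
    (hA : ∀ i j, 0 ≤ A i j)
    (L : Matrix (Fin n) (Fin n) ℝ)
    (hL : L = Matrix.diagonal (fun i => ∑ j, A i j) - A) :
    ((∀ i, ∑ j, A i j = ∑ j, A j i) ↔ (fun _ => (1 : ℝ)) ᵥ* L = 0) ∧
    ((∀ i, ∑ j, A i j = ∑ j, A j i) ↔ (L + Lᵀ).PosSemidef) := by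
  -- column sums of L
  have hcol : ∀ j, ∑ i, L i j = (∑ k, A j k) - ∑ i, A i j := by
    intro j
    subst hL
    simp only [Matrix.sub_apply, Matrix.diagonal_apply, Finset.sum_sub_distrib]
    congr 1
    rw [Finset.sum_eq_single j] <;> simp +contextual [eq_comm]
  have hvec : ((fun _ => (1 : ℝ)) ᵥ* L = 0) ↔ ∀ j, ∑ i, L i j = 0 := by
    rw [funext_iff]
    simp [Matrix.vecMul, dotProduct]
  have hiff1 : (∀ i, ∑ j, A i j = ∑ j, A j i) ↔ (fun _ => (1 : ℝ)) ᵥ* L = 0 := by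
    rw [hvec]
    constructor
    · intro h j; rw [hcol, h j, sub_self]
    · intro h i; have := h i; rw [hcol] at this; linarith
  refine ⟨hiff1, ?_⟩
  constructor
  · -- balanced → PSD
    intro hbal
    have hM : L + Lᵀ = Matrix.diagonal (fun i => ∑ j, (A + Aᵀ) i j) - (A + Aᵀ) := by
      subst hL
      ext i j
      by_cases h : i = j
      · subst h
        simp [Matrix.diagonal_apply, Matrix.transpose_apply, Finset.sum_add_distrib]
        linarith [hbal i]
      · simp [Matrix.diagonal_apply, h, Matrix.transpose_apply]
        ring
    have hherm : (L + Lᵀ)ᴴ = L + Lᵀ := by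
      ext i j
      simp [Matrix.conjTranspose_apply, Matrix.transpose_apply]
      ring
    rw [Matrix.posSemidef_iff_dotProduct_mulVec]
    constructor
    · exact hherm
    · intro x
      have hsym : ∀ i j, (A + Aᵀ) i j = (A + Aᵀ) j i := by
        intro i j; simp [Matrix.add_apply]; ring
      have key := quad_key (A + Aᵀ) hsym x
      rw [← hM] at key
      have hnn : 0 ≤ ∑ i, ∑ j, (A + Aᵀ) i j * (x i - x j) ^ 2 := by
        apply Finset.sum_nonneg; intro i _
        apply Finset.sum_nonneg; intro j _
        have : 0 ≤ (A + Aᵀ) i j := by simpa using add_nonneg (hA i j) (hA j i)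
        positivity
      simp only [star_trivial]
      linarith
  · -- PSD → balanced
    intro hPSD
    -- row sums of L are zero
    have hrow : ∀ i, ∑ j, L i j = 0 := by
      intro i
      subst hL
      simp [Matrix.sub_apply, Matrix.diagonal_apply, Finset.sum_sub_distrib,
        Finset.sum_ite_eq]
    have hMv : ((L + Lᵀ) *ᵥ (fun _ => (1 : ℝ))) = fun i => ∑ j, L j i := by
      funext i
      simp [Matrix.mulVec, dotProduct, Finset.sum_add_distrib, hrow i]
    have hq : star (fun _ => (1 : ℝ)) ⬝ᵥ ((L + Lᵀ) *ᵥ (fun _ => (1 : ℝ))) = 0 := by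
      simp only [star_trivial, hMv, dotProduct, one_mul]
      rw [Finset.sum_comm]
      simp [hrow]
    have h0 := (hPSD.dotProduct_mulVec_zero_iff (fun _ => (1 : ℝ))).mp hq
    rw [hMv] at h0
    intro i
    have h1 : ∑ j, L j i = 0 := congrFun h0 i
    rw [hcol i] at h1
    linarith
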